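/- Let X be a topological vector space, T a continuous linear operator on X, and x ∈ X with x ∈ M_x^T, where M_x^T = {y ∈ X : for every neighborhood U of 0, {n ∈ ℕ : y - T^n x ∈ U} has positive upper density}. Then M_x^T equals the closure of the orbit {T^n x : n ∈ ℕ}. -/

import Mathlib

open Filter Topology

open scoped Classical in
noncomputable def upperDensity (A : Set ℕ) : ℝ :=
  Filter.limsup (fun n : ℕ => (((Finset.range (n + 1)).filter (fun m => m ∈ A)).card : ℝ) / n) Filter.atTop

def Mset {𝕜 X : Type*} [RCLike 𝕜] [AddCommGroup X] [Module 𝕜 X] [TopologicalSpace X]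
    [IsTopologicalAddGroup X] [ContinuousSMul 𝕜 X] (T : X →L[𝕜] X) (x : X) : Set X :=
  {y | ∀ U ∈ 𝓝 (0 : X), 0 < upperDensity {n : ℕ | y - (T ^ n) x ∈ U}}

open scoped Classical

private noncomputable def udf (A : Set ℕ) (n : ℕ) : ℝ :=
  (((Finset.range (n + 1)).filter (fun m => m ∈ A)).card : ℝ) / n

private lemma udf_nonneg (A : Set ℕ) (n : ℕ) : 0 ≤ udf A n :=
  div_nonneg (by positivity) (by positivity)

private lemma udf_bdd (A : Set ℕ) :
    Filter.IsBoundedUnder (· ≤ ·) Filter.atTop (udf A) := by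
  refine ⟨2, ?_⟩
  rw [Filter.eventually_map]
  filter_upwards [Filter.eventually_ge_atTop 1] with n hn
  have h1 : (((Finset.range (n + 1)).filter (fun m => m ∈ A)).card : ℝ) ≤ (n : ℝ) + 1 := by
    exact_mod_cast le_trans (Finset.card_filter_le _ _) (by simp)
  have hn' : (1 : ℝ) ≤ (n : ℝ) := by exact_mod_cast hn
  rw [udf, div_le_iff₀ (by linarith)]
  linarith

private lemma udf_cobdd (A : Set ℕ) :
    Filter.IsCoboundedUnder (· ≤ ·) Filter.atTop (udf A) :=
  Filter.IsBoundedUnder.isCoboundedUnder_le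
    ⟨0, by rw [Filter.eventually_map]; exact Filter.Eventually.of_forall (udf_nonneg A)⟩

private lemma upperDensity_eq (A : Set ℕ) : upperDensity A = Filter.limsup (udf A) Filter.atTop :=
  rfl

private lemma ud_pos_nonempty {A : Set ℕ} (hA : 0 < upperDensity A) : A.Nonempty := by
  rw [upperDensity_eq] at hA
  obtain ⟨n, hn⟩ := (Filter.frequently_lt_of_lt_limsup (udf_cobdd A) hA).exists
  classical
  have hcard : ((Finset.range (n + 1)).filter (fun m => m ∈ A)).Nonempty := by
    rw [Finset.nonempty_iff_ne_empty]
    intro h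
    rw [udf, h] at hn
    simp at hn
  obtain ⟨m, hm⟩ := hcard
  exact ⟨m, (Finset.mem_filter.mp hm).2⟩

private lemma ud_pos_mono {A B : Set ℕ} (m : ℕ) (hAB : ∀ k ∈ A, k + m ∈ B)
    (hA : 0 < upperDensity A) : 0 < upperDensity B := by
  classical
  rw [upperDensity_eq] at hA ⊢
  set d := Filter.limsup (udf A) Filter.atTop with hd
  have hfreq : ∃ᶠ n in Filter.atTop, d / 2 < udf A n :=
    Filter.frequently_lt_of_lt_limsup (udf_cobdd A) (by linarith)
  have key : ∃ᶠ k in Filter.atTop, d / 4 ≤ udf B k := by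
    rw [Filter.frequently_atTop] at hfreq ⊢
    intro N
    obtain ⟨n, hn, hdn⟩ := hfreq (max N (max m 1))
    have hnN : N ≤ n := le_trans (le_max_left _ _) hn
    have hnm : m ≤ n := le_trans (le_trans (le_max_left _ _) (le_max_right _ _)) hn
    have hn1 : 1 ≤ n := le_trans (le_trans (le_max_right _ _) (le_max_right _ _)) hn
    refine ⟨n + m, le_trans hnN (Nat.le_add_right _ _), ?_⟩
    -- card comparison
    have hcard : ((Finset.range (n + 1)).filter (fun j => j ∈ A)).card ≤
        ((Finset.range (n + m + 1)).filter (fun j => j ∈ B)).card := by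
      apply Finset.card_le_card_of_injOn (fun k => k + m)
      · intro k hk
        simp only [Finset.mem_coe, Finset.mem_filter, Finset.mem_range] at hk ⊢
        exact ⟨by omega, hAB _ hk.2⟩
      · intro a _ b _ h
        exact add_left_injective m h
    have hnR : (1 : ℝ) ≤ (n : ℝ) := by exact_mod_cast hn1
    have hmR : (m : ℝ) ≤ (n : ℝ) := by exact_mod_cast hnm
    have hcardA : d / 2 * n < (((Finset.range (n + 1)).filter (fun j => j ∈ A)).card : ℝ) := by
      rw [udf, lt_div_iff₀ (by linarith)] at hdn
      linarith
    have hdpos : 0 < d := by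
      have := udf_nonneg A n
      nlinarith
    have hcardR : (((Finset.range (n + 1)).filter (fun j => j ∈ A)).card : ℝ) ≤
        (((Finset.range (n + m + 1)).filter (fun j => j ∈ B)).card : ℝ) := by
      exact_mod_cast hcard
    rw [udf, le_div_iff₀ (by push_cast; linarith)]
    push_cast
    nlinarith
  have := Filter.le_limsup_of_frequently_le key (udf_bdd B)
  have hdpos : 0 < d := by
    obtain ⟨n, hn⟩ := hfreq.exists
    have := udf_nonneg A n
    linarith
  linarith

theorem Mset_eq_closure_orbit {𝕜 X : Type*} [RCLike 𝕜] [AddCommGroup X] [Module 𝕜 X]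
    [TopologicalSpace X] [IsTopologicalAddGroup X] [ContinuousSMul 𝕜 X]
    (T : X →L[𝕜] X) (x : X) (hx : x ∈ Mset T x) :
    Mset T x = closure (Set.range fun n : ℕ => (T ^ n) x) := by
  have horb : ∀ m : ℕ, (T ^ m) x ∈ Mset T x := by
    intro m U hU
    have hc : ContinuousAt (fun u : X => (T ^ m) u) 0 := (T ^ m).continuous.continuousAt
    have hU' : (fun u : X => (T ^ m) u) ⁻¹' U ∈ 𝓝 (0 : X) := by
      apply hc.preimage_mem_nhds
      simpa using hU
    refine ud_pos_mono m ?_ (hx _ hU')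
    intro k hk
    simp only [Set.mem_setOf_eq, Set.mem_preimage] at hk ⊢
    have hpow : (T ^ (k + m)) x = (T ^ m) ((T ^ k) x) := by
      rw [add_comm, pow_add, ContinuousLinearMap.mul_apply]
    rw [hpow, ← map_sub]
    exact hk
  apply Set.Subset.antisymm
  · intro y hy
    rw [mem_closure_iff_nhds]
    intro V hV
    have hc : ContinuousAt (fun u : X => y - u) 0 := by
      exact (continuous_const.sub continuous_id).continuousAt
    have hU : (fun u : X => y - u) ⁻¹' V ∈ 𝓝 (0 : X) := by
      apply hc.preimage_mem_nhds
      simpa using hV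
    obtain ⟨n, hn⟩ := ud_pos_nonempty (hy _ hU)
    refine ⟨(T ^ n) x, ?_, ⟨n, rfl⟩⟩
    have : y - (y - (T ^ n) x) ∈ V := hn
    simpa using this
  · intro y hy U hU
    obtain ⟨W, hW, hWU⟩ := exists_nhds_zero_half hU
    have hc : ContinuousAt (fun u : X => y - u) y := by
      exact (continuous_const.sub continuous_id).continuousAt
    have hV : (fun u : X => y - u) ⁻¹' W ∈ 𝓝 y := by
      apply hc.preimage_mem_nhds
      simpa using hW
    obtain ⟨z, hz1, m, hm⟩ := mem_closure_iff_nhds.mp hy _ hV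
    have hz2 : y - z ∈ W := hz1
    subst hm
    refine ud_pos_mono 0 ?_ (horb m W hW)
    intro k hk
    simp only [Set.mem_setOf_eq, Nat.add_zero] at hk ⊢
    have : (y - (T ^ m) x) + ((T ^ m) x - (T ^ k) x) ∈ U := hWU _ hz2 _ hk
    simpa using this
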